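/- Let A be a finite abelian group and n a positive integer. Define Δ : Hom(A ⊗ A, ℤ/n) → Hom(A ⊗ A, ℤ/n) by (Δf)(a ⊗ b) = f(b ⊗ a) − f(a ⊗ b). Then the image of Δ is exactly the set of alternating homomorphisms g (those with g(a ⊗ a) = 0 for all a ∈ A), and the kernel of Δ is exactly the set of symmetric homomorphisms g (those with g(a ⊗ b) = g(b ⊗ a) for all a, b ∈ A). -/

import Mathlib

open TensorProduct DirectSum

private lemma anti_aux {A : Type*} [AddCommGroup A] {n : ℕ}
    (g : A ⊗[ℤ] A →ₗ[ℤ] ZMod n) (hg : ∀ a : A, g (a ⊗ₜ[ℤ] a) = 0)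
    (a b : A) : g (a ⊗ₜ[ℤ] b) = - g (b ⊗ₜ[ℤ] a) := by
  have h := hg (a + b)
  simp only [TensorProduct.add_tmul, TensorProduct.tmul_add, map_add, hg a, hg b,
    add_zero, zero_add] at h
  exact eq_neg_of_add_eq_zero_right (by linear_combination h)

private lemma cc {A : Type*} [AddCommGroup A] {n : ℕ} (f : A ⊗[ℤ] A →ₗ[ℤ] ZMod n) (a b : A) :
    (f ∘ₗ (TensorProduct.comm ℤ A A).toLinearMap : A ⊗[ℤ] A →ₗ[ℤ] ZMod n) (a ⊗ₜ[ℤ] b) =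
      f (b ⊗ₜ[ℤ] a) :=
  (LinearMap.comp_apply _ _ _).trans (congrArg f (TensorProduct.comm_tmul ℤ A A a b))

private lemma ccs {A : Type*} [AddCommGroup A] {n : ℕ} (f : A ⊗[ℤ] A →ₗ[ℤ] ZMod n) (a b : A) :
    ((f ∘ₗ (TensorProduct.comm ℤ A A).toLinearMap : A ⊗[ℤ] A →ₗ[ℤ] ZMod n) - f) (a ⊗ₜ[ℤ] b) =
      f (b ⊗ₜ[ℤ] a) - f (a ⊗ₜ[ℤ] b) :=
  (LinearMap.sub_apply _ _ _).trans (congrArg (· - f (a ⊗ₜ[ℤ] b)) (cc f a b))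

private lemma exists_delta {A : Type*} [AddCommGroup A] [Finite A] {n : ℕ}
    (g : A ⊗[ℤ] A →ₗ[ℤ] ZMod n) (hg : ∀ a : A, g (a ⊗ₜ[ℤ] a) = 0) :
    ∃ f : A ⊗[ℤ] A →ₗ[ℤ] ZMod n,
      (f ∘ₗ (TensorProduct.comm ℤ A A).toLinearMap : A ⊗[ℤ] A →ₗ[ℤ] ZMod n) - f = g := by
  classical
  obtain ⟨ι, hι, m, hm, ⟨φ⟩⟩ := AddCommGroup.equiv_directSum_zmod_of_finite' A
  letI : LinearOrder ι := LinearOrder.lift' (Fintype.equivFin ι) (Equiv.injective _)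
  set x : ι → A →ₗ[ℤ] A := fun i =>
    (φ.symm.toAddMonoidHom.comp (((DirectSum.of (fun i => ZMod (m i)) i).comp
      (DFinsupp.evalAddMonoidHom i)).comp φ.toAddMonoidHom)).toIntLinearMap with hx
  have hsum : ∀ a : A, ∑ i, x i a = a := by
    intro a
    apply φ.injective
    rw [map_sum]
    have h1 : ∀ i, φ (x i a) = DirectSum.of (fun i => ZMod (m i)) i (φ a i) := by
      intro i
      simp only [hx, AddMonoidHom.coe_toIntLinearMap, AddMonoidHom.coe_comp,
        Function.comp_apply, AddEquiv.coe_toAddMonoidHom, AddEquiv.apply_symm_apply]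
      rfl
    rw [Finset.sum_congr rfl fun i _ => h1 i]
    exact DirectSum.sum_univ_of (φ a)
  have hdiag : ∀ (i : ι) (a b : A), g (x i a ⊗ₜ[ℤ] x i b) = 0 := by
    intro i a b
    set u : A := φ.symm (DirectSum.of (fun i => ZMod (m i)) i 1) with hu
    have key : ∀ c : A, x i c = ((φ c i).val : ℤ) • u := by
      intro c
      haveI : NeZero (m i) := ⟨by have := hm i; omega⟩
      have h2 : DirectSum.of (fun i => ZMod (m i)) i (φ c i)
          = (φ c i).val • DirectSum.of (fun i => ZMod (m i)) i 1 := by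
        rw [← map_nsmul]
        congr 1
        rw [nsmul_eq_mul, mul_one, ZMod.natCast_val, ZMod.cast_id]
      have h3 : φ (x i c) = DirectSum.of (fun i => ZMod (m i)) i (φ c i) := by
        simp only [hx, AddMonoidHom.coe_toIntLinearMap, AddMonoidHom.coe_comp,
          Function.comp_apply, AddEquiv.coe_toAddMonoidHom, AddEquiv.apply_symm_apply]
        rfl
      apply φ.injective
      rw [h3, h2, map_zsmul, hu, AddEquiv.apply_symm_apply, natCast_zsmul]
    rw [key a, key b, TensorProduct.smul_tmul_smul, map_smul, hg u, smul_zero]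
  set S : Finset (ι × ι) := Finset.univ.filter (fun p => p.1 < p.2) with hS
  set f : A ⊗[ℤ] A →ₗ[ℤ] ZMod n :=
    ∑ p ∈ S, g ∘ₗ TensorProduct.map (x p.1) (x p.2) with hf
  refine ⟨-f, TensorProduct.ext' fun a b => ?_⟩
  have hfab : ∀ a b : A, f (a ⊗ₜ[ℤ] b) = ∑ p ∈ S, g (x p.1 a ⊗ₜ[ℤ] x p.2 b) := by
    intro a b
    simp [hf, LinearMap.sum_apply]
    rfl
  have expand : g (a ⊗ₜ[ℤ] b) = ∑ p : ι × ι, g (x p.1 a ⊗ₜ[ℤ] x p.2 b) := by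
    conv_lhs => rw [← hsum a, ← hsum b]
    rw [TensorProduct.sum_tmul, map_sum, Fintype.sum_prod_type]
    refine Finset.sum_congr rfl fun i _ => ?_
    rw [TensorProduct.tmul_sum, map_sum]
  have expand2 : g (a ⊗ₜ[ℤ] b)
      = ∑ p ∈ S, g (x p.1 a ⊗ₜ[ℤ] x p.2 b)
        + ∑ p ∈ Finset.univ.filter (fun p : ι × ι => p.2 < p.1),
            g (x p.1 a ⊗ₜ[ℤ] x p.2 b) := by
    rw [expand]
    rw [← Finset.sum_filter_add_sum_filter_not Finset.univ (fun p : ι × ι => p.1 < p.2)]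
    congr 1
    refine (Finset.sum_subset ?_ ?_).symm
    · intro p hp
      simp only [Finset.mem_filter, Finset.mem_univ, true_and] at hp ⊢
      exact asymm hp
    · intro p hp hnp
      simp only [Finset.mem_filter, Finset.mem_univ, true_and, not_lt] at hp hnp
      have : p.1 = p.2 := le_antisymm hnp hp
      rw [show p.2 = p.1 from this.symm]
      exact hdiag p.1 a b
  have swap : ∑ p ∈ Finset.univ.filter (fun p : ι × ι => p.2 < p.1),
      g (x p.1 a ⊗ₜ[ℤ] x p.2 b)
      = - ∑ p ∈ S, g (x p.1 b ⊗ₜ[ℤ] x p.2 a) := by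
    rw [← Finset.sum_neg_distrib]
    refine Finset.sum_nbij' Prod.swap Prod.swap ?_ ?_ ?_ ?_ ?_
    · intro p hp
      simp only [hS, Finset.mem_filter, Finset.mem_univ, true_and] at hp ⊢
      exact hp
    · intro p hp
      simp only [hS, Finset.mem_filter, Finset.mem_univ, true_and] at hp ⊢
      exact hp
    · intro p _; rfl
    · intro p _; rfl
    · intro p hp
      exact anti_aux g hg _ _
  refine (ccs (-f) a b).trans ?_
  simp only [LinearMap.sub_apply, LinearMap.comp_apply, LinearEquiv.coe_coe,
    TensorProduct.comm_tmul, LinearMap.neg_apply]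
  refine Eq.trans ?_ expand2.symm
  rw [hfab b a, hfab a b, swap]
  ring


open TensorProduct in
/-- For a finite abelian group `A` and `n > 0`, the map
`Δ : Hom(A ⊗ A, ℤ/n) → Hom(A ⊗ A, ℤ/n)`, `(Δf)(a ⊗ b) = f(b ⊗ a) − f(a ⊗ b)`,
has image exactly the alternating homomorphisms and kernel exactly the symmetric ones. -/
theorem stmt_0 (A : Type*) [AddCommGroup A] [Finite A] (n : ℕ) (hn : 0 < n) :
    (∀ g : A ⊗[ℤ] A →ₗ[ℤ] ZMod n,
      ((∃ f : A ⊗[ℤ] A →ₗ[ℤ] ZMod n,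
          (f ∘ₗ (TensorProduct.comm ℤ A A).toLinearMap : A ⊗[ℤ] A →ₗ[ℤ] ZMod n) - f = g) ↔
        ∀ a : A, g (a ⊗ₜ[ℤ] a) = 0)) ∧
    (∀ f : A ⊗[ℤ] A →ₗ[ℤ] ZMod n,
      ((f ∘ₗ (TensorProduct.comm ℤ A A).toLinearMap : A ⊗[ℤ] A →ₗ[ℤ] ZMod n) - f = 0 ↔
        ∀ a b : A, f (a ⊗ₜ[ℤ] b) = f (b ⊗ₜ[ℤ] a))) := by
  constructor
  · intro g
    constructor
    · rintro ⟨f, rfl⟩ a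
      rw [LinearMap.sub_apply, cc, sub_self]
    · exact exists_delta g
  · intro f
    constructor
    · intro h a b
      have := congrArg (fun F => F (a ⊗ₜ[ℤ] b)) h
      simp only [LinearMap.sub_apply, LinearMap.comp_apply, LinearEquiv.coe_coe,
        TensorProduct.comm_tmul, LinearMap.zero_apply] at this
      rw [cc] at this
      linear_combination -this
    · intro h
      refine TensorProduct.ext' fun a b => ?_
      refine (ccs f a b).trans ?_
      rw [h b a, sub_self]
      rfl
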